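/- For any two stochastic policies π and π' of a discounted MDP with γ ∈ [0,1) and any probability distribution μ on states, μ·(v_{π'} - v_π) = (1-γ)^{-1} d_{μ,π'}·(T_{π'}v_π - v_π) ≤ (1-γ)^{-1} d_{μ,π'}·(T v_π - v_π), where T is the optimal Bellman operator. -/
import Mathlib


open Matrix Filter Topology

section MDPdefs

variable {S A : Type*}

/-- `P` is a transition kernel: nonnegative and each row sums to one. -/
def IsKernel [Fintype S] (P : S → A → S → ℝ) : Prop :=
  ∀ s a, (∀ s', 0 ≤ P s a s') ∧ ∑ s', P s a s' = 1

/-- A stochastic policy: a probability distribution over actions in each state. -/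
def IsPolicy [Fintype A] (π : S → A → ℝ) : Prop :=
  ∀ s, (∀ a, 0 ≤ π s a) ∧ ∑ a, π s a = 1

/-- A probability distribution over states. -/
def IsDist [Fintype S] (μ : S → ℝ) : Prop :=
  (∀ s, 0 ≤ μ s) ∧ ∑ s, μ s = 1

/-- The reward vector `r_π(s) = ∑_a π(a|s) r(s,a)`. -/
def rPol [Fintype A] (r : S → A → ℝ) (π : S → A → ℝ) : S → ℝ :=
  fun s => ∑ a, π s a * r s a

/-- The stochastic matrix `P_π(s,s') = ∑_a π(a|s) P(s'|s,a)`. -/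
def PPol [Fintype A] (P : S → A → S → ℝ) (π : S → A → ℝ) : Matrix S S ℝ :=
  Matrix.of fun s s' => ∑ a, π s a * P s a s'

/-- The Bellman operator `T_π v = r_π + γ P_π v`. -/
noncomputable def bellman [Fintype S] [Fintype A] (P : S → A → S → ℝ) (r : S → A → ℝ)
    (γ : ℝ) (π : S → A → ℝ) (v : S → ℝ) : S → ℝ :=
  rPol r π + γ • (PPol P π *ᵥ v)

/-- The optimal Bellman operator `(Tv)(s) = max_a [r(s,a) + γ ∑_{s'} P(s'|s,a) v(s')]`. -/
noncomputable def optBellman [Fintype S] [Fintype A] [Nonempty A] (P : S → A → S → ℝ)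
    (r : S → A → ℝ) (γ : ℝ) (v : S → ℝ) : S → ℝ :=
  fun s => Finset.univ.sup' Finset.univ_nonempty fun a => r s a + γ * ∑ s', P s a s' * v s'

/-- The value function of policy `π`, `v_π = (I - γ P_π)⁻¹ r_π`, the unique solution of
`v = r_π + γ P_π v` when `0 ≤ γ < 1`. -/
noncomputable def valueFn [Fintype S] [Fintype A] [DecidableEq S] (P : S → A → S → ℝ)
    (r : S → A → ℝ) (γ : ℝ) (π : S → A → ℝ) : S → ℝ :=
  ((1 : Matrix S S ℝ) - γ • PPol P π)⁻¹ *ᵥ rPol r π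

/-- The γ-weighted occupancy measure `d_{μ,π} = (1-γ) μ (I - γ P_π)⁻¹` (a row vector). -/
noncomputable def occ [Fintype S] [Fintype A] [DecidableEq S] (P : S → A → S → ℝ)
    (γ : ℝ) (μ : S → ℝ) (π : S → A → ℝ) : S → ℝ :=
  (1 - γ) • (μ ᵥ* ((1 : Matrix S S ℝ) - γ • PPol P π)⁻¹)

/-- The stochastic mixture `(1-α)π + απ'`. -/
def mix (α : ℝ) (π π' : S → A → ℝ) : S → A → ℝ :=
  fun s a => (1 - α) * π s a + α * π' s a

/-- The `ν`-greedy-complexity `E_ν(Π) = sup_{ρ∈Π} inf_{ρ'∈Π} d_{ν,ρ}·(T v_ρ - T_{ρ'} v_ρ)`. -/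
noncomputable def greedyCplx [Fintype S] [Fintype A] [Nonempty A] [DecidableEq S]
    (P : S → A → S → ℝ) (r : S → A → ℝ) (γ : ℝ) (ν : S → ℝ)
    (Pol : Set (S → A → ℝ)) : ℝ :=
  ⨆ ρ : Pol, ⨅ ρ' : Pol,
    occ P γ ν (ρ : S → A → ℝ) ⬝ᵥ
      (optBellman P r γ (valueFn P r γ (ρ : S → A → ℝ)) -
        bellman P r γ (ρ' : S → A → ℝ) (valueFn P r γ (ρ : S → A → ℝ)))

/-- `π` is an `ε`-local optimum of `J_ν` over `Pol`: for every `π' ∈ Pol`, the (one-sided)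
limit of `(ν·v_{(1-α)π+απ'} - ν·v_π)/α` as `α → 0⁺` exists and is at most `ε`. -/
def IsLocalOpt [Fintype S] [Fintype A] [DecidableEq S]
    (P : S → A → S → ℝ) (r : S → A → ℝ) (γ : ℝ) (ν : S → ℝ)
    (Pol : Set (S → A → ℝ)) (π : S → A → ℝ) (ε : ℝ) : Prop :=
  ∀ π' ∈ Pol, ∃ L ≤ ε,
    Tendsto (fun α : ℝ =>
        (ν ⬝ᵥ valueFn P r γ (mix α π π') - ν ⬝ᵥ valueFn P r γ π) / α)
      (𝓝[>] 0) (𝓝 L)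

end MDPdefs

section Aux

variable {S : Type*} [Fintype S] [Nonempty S] [DecidableEq S]

/-- If `x = e + γ P x` with `e ≥ 0` and `P` row-stochastic, `0 ≤ γ < 1`, then `x ≥ 0`. -/
lemma aux_nonneg (PP : Matrix S S ℝ)
    (hrow : ∀ s, (∀ s', 0 ≤ PP s s') ∧ ∑ s', PP s s' = 1)
    {γ : ℝ} (hγ0 : 0 ≤ γ) (hγ1 : γ < 1)
    (x e : S → ℝ) (he : ∀ s, 0 ≤ e s)
    (hx : ∀ s, x s = e s + γ * (PP *ᵥ x) s) : ∀ s, 0 ≤ x s := by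
  obtain ⟨s₀, -, hs₀⟩ := Finset.exists_min_image Finset.univ x ⟨Classical.arbitrary S, Finset.mem_univ _⟩
  have hmin : ∀ s, x s₀ ≤ x s := fun s => hs₀ s (Finset.mem_univ s)
  have hP : x s₀ ≤ (PP *ᵥ x) s₀ := by
    have : ∑ s', PP s₀ s' * x s₀ ≤ ∑ s', PP s₀ s' * x s' :=
      Finset.sum_le_sum fun s' _ => mul_le_mul_of_nonneg_left (hmin s') ((hrow s₀).1 s')
    calc x s₀ = (∑ s', PP s₀ s') * x s₀ := by rw [(hrow s₀).2, one_mul]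
      _ = ∑ s', PP s₀ s' * x s₀ := Finset.sum_mul ..
      _ ≤ ∑ s', PP s₀ s' * x s' := this
      _ = (PP *ᵥ x) s₀ := rfl
  have h0 : 0 ≤ x s₀ := by
    have := hx s₀
    nlinarith [he s₀, mul_le_mul_of_nonneg_left hP hγ0]
  exact fun s => le_trans h0 (hmin s)

lemma aux_isUnit (PP : Matrix S S ℝ)
    (hrow : ∀ s, (∀ s', 0 ≤ PP s s') ∧ ∑ s', PP s s' = 1)
    {γ : ℝ} (hγ0 : 0 ≤ γ) (hγ1 : γ < 1) :
    IsUnit ((1 : Matrix S S ℝ) - γ • PP) := by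
  rw [← Matrix.mulVec_injective_iff_isUnit]
  intro x y hxy
  have key : ∀ z : S → ℝ, ((1 : Matrix S S ℝ) - γ • PP) *ᵥ z = 0 → ∀ s, 0 ≤ z s := by
    intro z hz
    refine aux_nonneg PP hrow hγ0 hγ1 z 0 (fun s => le_refl 0) fun s => ?_
    have := congrFun hz s
    simp [Matrix.sub_mulVec, Matrix.smul_mulVec] at this
    simp [Pi.zero_apply]
    linarith [this]
  have h1 : ((1 : Matrix S S ℝ) - γ • PP) *ᵥ (x - y) = 0 := by
    rw [Matrix.mulVec_sub, hxy, sub_self]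
  have h2 : ((1 : Matrix S S ℝ) - γ • PP) *ᵥ (y - x) = 0 := by
    rw [Matrix.mulVec_sub, hxy, sub_self]
  funext s
  have := key _ h1 s
  have := key _ h2 s
  simp [Pi.sub_apply] at *
  linarith

end Aux

section Aux2

variable {S A : Type*} [Fintype S] [Fintype A] [Nonempty S] [DecidableEq S]

lemma aux_rows (P : S → A → S → ℝ) (hP : IsKernel P) (π : S → A → ℝ) (hπ : IsPolicy π) :
    ∀ s, (∀ s', 0 ≤ PPol P π s s') ∧ ∑ s', PPol P π s s' = 1 := by
  intro s
  constructor
  · intro s'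
    exact Finset.sum_nonneg fun a _ => mul_nonneg ((hπ s).1 a) ((hP s a).1 s')
  · rw [show ∑ s', PPol P π s s' = ∑ s', ∑ a, π s a * P s a s' from rfl, Finset.sum_comm]
    simp_rw [← Finset.mul_sum]
    simp only [fun a => (hP s a).2, mul_one]
    exact (hπ s).2

lemma aux_mulVec_val (P : S → A → S → ℝ) (hP : IsKernel P) (r : S → A → ℝ) {γ : ℝ}
    (hγ0 : 0 ≤ γ) (hγ1 : γ < 1) (π : S → A → ℝ) (hπ : IsPolicy π) :
    ((1 : Matrix S S ℝ) - γ • PPol P π) *ᵥ valueFn P r γ π = rPol r π := by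
  have hU := aux_isUnit (PPol P π) (aux_rows P hP π hπ) hγ0 hγ1
  rw [valueFn, Matrix.mulVec_mulVec,
    Matrix.mul_nonsing_inv _ ((Matrix.isUnit_iff_isUnit_det _).1 hU), Matrix.one_mulVec]

end Aux2



/-- `μ·(v_{π'} - v_π) = (1-γ)⁻¹ d_{μ,π'}·(T_{π'}v_π - v_π)
≤ (1-γ)⁻¹ d_{μ,π'}·(T v_π - v_π)`. -/
theorem stmt_9 {S A : Type*} [Fintype S] [Fintype A] [Nonempty S] [Nonempty A] [DecidableEq S]
    (P : S → A → S → ℝ) (hP : IsKernel P) (r : S → A → ℝ) (γ : ℝ)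
    (hγ0 : 0 ≤ γ) (hγ1 : γ < 1)
    (π π' : S → A → ℝ) (hπ : IsPolicy π) (hπ' : IsPolicy π')
    (μ : S → ℝ) (hμ : IsDist μ) :
    μ ⬝ᵥ (valueFn P r γ π' - valueFn P r γ π)
      = (1 - γ)⁻¹ * (occ P γ μ π' ⬝ᵥ (bellman P r γ π' (valueFn P r γ π) - valueFn P r γ π))
    ∧ μ ⬝ᵥ (valueFn P r γ π' - valueFn P r γ π)
      ≤ (1 - γ)⁻¹ * (occ P γ μ π' ⬝ᵥ (optBellman P r γ (valueFn P r γ π) - valueFn P r γ π)) := by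
  have vrows := aux_rows P hP π' hπ'
  have hU := aux_isUnit (PPol P π') vrows hγ0 hγ1
  have hdet := (Matrix.isUnit_iff_isUnit_det _).1 hU
  set M : Matrix S S ℝ := (1 : Matrix S S ℝ) - γ • PPol P π' with hM
  set v := valueFn P r γ π
  set v' := valueFn P r γ π'
  have h1γ : (0:ℝ) < 1 - γ := by linarith
  -- Bellman equations
  have hMv' : M *ᵥ v' = rPol r π' := aux_mulVec_val P hP r hγ0 hγ1 π' hπ'
  have hMv : M *ᵥ v = v - γ • (PPol P π' *ᵥ v) := by
    rw [hM, Matrix.sub_mulVec, Matrix.one_mulVec, Matrix.smul_mulVec]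
  have hkey : M *ᵥ (v' - v) = bellman P r γ π' v - v := by
    rw [Matrix.mulVec_sub, hMv', hMv, bellman]
    ext s; simp; ring
  have hdiff : v' - v = M⁻¹ *ᵥ (bellman P r γ π' v - v) := by
    rw [← hkey, Matrix.mulVec_mulVec, Matrix.nonsing_inv_mul _ hdet, Matrix.one_mulVec]
  -- the weight vector
  set w := μ ᵥ* M⁻¹ with hw
  have hdot : μ ⬝ᵥ (v' - v) = w ⬝ᵥ (bellman P r γ π' v - v) := by
    rw [hdiff, Matrix.dotProduct_mulVec]
  have hocc : ∀ u : S → ℝ, occ P γ μ π' ⬝ᵥ u = (1 - γ) * (w ⬝ᵥ u) := by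
    intro u
    rw [occ, smul_dotProduct]
    rfl
  have heq : μ ⬝ᵥ (v' - v)
      = (1 - γ)⁻¹ * (occ P γ μ π' ⬝ᵥ (bellman P r γ π' v - v)) := by
    rw [hocc, hdot, ← mul_assoc, inv_mul_cancel₀ h1γ.ne', one_mul]
  refine ⟨heq, ?_⟩
  rw [hdot, hocc, ← mul_assoc, inv_mul_cancel₀ h1γ.ne', one_mul]
  -- nonnegativity of w
  have hMinv : ∀ s s', 0 ≤ M⁻¹ s s' := by
    intro s s'
    have he : ∀ t, (0:ℝ) ≤ (Pi.single s' 1 : S → ℝ) t := fun t => by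
      simp only [Pi.single_apply]
      split <;> norm_num
    have hx : ∀ t, (M⁻¹ *ᵥ (Pi.single s' 1 : S → ℝ)) t
        = (Pi.single s' 1 : S → ℝ) t + γ * ((PPol P π' *ᵥ (M⁻¹ *ᵥ (Pi.single s' 1 : S → ℝ))) t) := by
      intro t
      have : M *ᵥ (M⁻¹ *ᵥ (Pi.single s' 1 : S → ℝ)) = (Pi.single s' 1 : S → ℝ) := by
        rw [Matrix.mulVec_mulVec, Matrix.mul_nonsing_inv _ hdet, Matrix.one_mulVec]
      have ht := congrFun this t
      rw [hM, Matrix.sub_mulVec, Matrix.one_mulVec, Matrix.smul_mulVec] at ht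
      simp only [Pi.sub_apply, Pi.smul_apply, smul_eq_mul] at ht
      linarith
    have hnn := aux_nonneg (PPol P π') vrows hγ0 hγ1 _ _ he hx s
    have : (M⁻¹ *ᵥ (Pi.single s' 1 : S → ℝ)) s = M⁻¹ s s' := by
      simp [Matrix.mulVec, dotProduct, Pi.single_apply]
    linarith [hnn, this.symm.le]
  have hwnn : ∀ s', 0 ≤ w s' := by
    intro s'
    exact Finset.sum_nonneg fun s _ => mul_nonneg (hμ.1 s) (hMinv s s')
  -- pointwise bellman ≤ optBellman
  have hptwise : ∀ s, bellman P r γ π' v s ≤ optBellman P r γ v s := by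
    intro s
    have hexp : bellman P r γ π' v s
        = ∑ a, π' s a * (r s a + γ * ∑ s', P s a s' * v s') := by
      simp only [bellman, Pi.add_apply, Pi.smul_apply, smul_eq_mul, rPol,
        Matrix.mulVec, dotProduct, PPol, Matrix.of_apply]
      simp_rw [mul_add, Finset.sum_add_distrib, Finset.mul_sum, Finset.sum_mul,
        Finset.sum_comm (γ := A)]
      congr 1
      refine Finset.sum_congr rfl fun x _ => ?_
      rw [Finset.mul_sum]
      exact Finset.sum_congr rfl fun a _ => by ring
    rw [hexp, optBellman]
    calc ∑ a, π' s a * (r s a + γ * ∑ s', P s a s' * v s')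
        ≤ ∑ a, π' s a * (Finset.univ.sup' Finset.univ_nonempty
            fun a : A => r s a + γ * ∑ s', P s a s' * v s') := by
          refine Finset.sum_le_sum fun a _ => mul_le_mul_of_nonneg_left ?_ ((hπ' s).1 a)
          exact Finset.le_sup' (fun a : A => r s a + γ * ∑ s', P s a s' * v s')
            (Finset.mem_univ a)
      _ = _ := by rw [← Finset.sum_mul, (hπ' s).2, one_mul]
  refine Finset.sum_le_sum fun s' _ => mul_le_mul_of_nonneg_left ?_ (hwnn s')
  exact sub_le_sub_right (hptwise s') _
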